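/- If a workflow net N is continuously sound, then for every k ≥ 1 the marked net (N, {i:k}) is bounded. -/

import Mathlib

structure PetriNet (P T : Type) [Fintype P] [Fintype T] where
  pre : T → P → ℕ
  post : T → P → ℕ

variable {P T : Type} [Fintype P] [Fintype T] [DecidableEq P]

namespace PetriNet

def enabled (N : PetriNet P T) (t : T) (m : P → ℕ) : Prop := ∀ p, N.pre t p ≤ m p

def fires (N : PetriNet P T) (m m' : P → ℕ) : Prop :=
  ∃ t, N.enabled t m ∧ ∀ p, m' p = m p + N.post t p - N.pre t p

def reach (N : PetriNet P T) : (P → ℕ) → (P → ℕ) → Prop := Relation.ReflTransGen N.fires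

def zfires (N : PetriNet P T) (m m' : P → ℤ) : Prop :=
  ∃ t, ∀ p, m' p = m p + (N.post t p : ℤ) - (N.pre t p : ℤ)

def zreach (N : PetriNet P T) : (P → ℤ) → (P → ℤ) → Prop := Relation.ReflTransGen N.zfires

def cfires (N : PetriNet P T) (m m' : P → ℚ) : Prop :=
  ∃ t, ∃ l : ℚ, 0 < l ∧ l ≤ 1 ∧ (∀ p, l * (N.pre t p : ℚ) ≤ m p) ∧
    ∀ p, m' p = m p + l * ((N.post t p : ℚ) - (N.pre t p : ℚ))

def creach (N : PetriNet P T) : (P → ℚ) → (P → ℚ) → Prop := Relation.ReflTransGen N.cfires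

def bounded (N : PetriNet P T) (m : P → ℕ) : Prop :=
  ∃ b : ℕ, ∀ m', N.reach m m' → ∀ p, m' p ≤ b

def zbounded (N : PetriNet P T) (m : P → ℕ) : Prop :=
  ∃ b : ℕ, ∀ m' : P → ℤ, N.zreach (fun p => (m p : ℤ)) m' → (∀ p, 0 ≤ m' p) →
    ∀ p, m' p ≤ (b : ℤ)

def quasiLive (N : PetriNet P T) (m : P → ℕ) (t : T) : Prop :=
  ∃ m', N.reach m m' ∧ N.enabled t m'

def live (N : PetriNet P T) (m : P → ℕ) (t : T) : Prop :=
  ∀ m', N.reach m m' → N.quasiLive m' t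

def freeChoice (N : PetriNet P T) : Prop :=
  ∀ s t : T, (∀ p, N.pre s p = 0 ∨ N.pre t p = 0) ∨ N.pre s = N.pre t

def edge (N : PetriNet P T) : (P ⊕ T) → (P ⊕ T) → Prop
  | Sum.inl p, Sum.inr t => 0 < N.pre t p
  | Sum.inr t, Sum.inl p => 0 < N.post t p
  | _, _ => False

end PetriNet

/-- The marking with `k` tokens in place `p` and none elsewhere. -/
def mk1 (p : P) (k : ℕ) : P → ℕ := fun q => if q = p then k else 0

/-- The continuous marking with `k` tokens in place `p` and none elsewhere. -/
def mkQ (p : P) (k : ℚ) : P → ℚ := fun q => if q = p then k else 0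

structure WorkflowNet (P T : Type) [Fintype P] [Fintype T] extends PetriNet P T where
  i : P
  f : P
  i_ne_f : i ≠ f
  no_into_initial : ∀ t, toPetriNet.post t i = 0
  no_from_final : ∀ t, toPetriNet.pre t f = 0
  place_on_path : ∀ p : P,
    Relation.ReflTransGen toPetriNet.edge (Sum.inl i) (Sum.inl p) ∧
    Relation.ReflTransGen toPetriNet.edge (Sum.inl p) (Sum.inl f)
  trans_on_path : ∀ t : T,
    Relation.ReflTransGen toPetriNet.edge (Sum.inl i) (Sum.inr t) ∧
    Relation.ReflTransGen toPetriNet.edge (Sum.inr t) (Sum.inl f)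

/-- `k`-soundness of a workflow net. -/
def WorkflowNet.ksound (N : WorkflowNet P T) (k : ℕ) : Prop :=
  ∀ m, N.toPetriNet.reach (mk1 N.i k) m → N.toPetriNet.reach m (mk1 N.f k)

/-- Continuous soundness of a workflow net. -/
def WorkflowNet.csound (N : WorkflowNet P T) : Prop :=
  ∀ m : P → ℚ, N.toPetriNet.creach (mkQ N.i 1) m → N.toPetriNet.creach m (mkQ N.f 1)

set_option linter.unusedSectionVars false

namespace PetriNet

/-- Reversed run: head is the endpoint, last element is `m0`. -/
def IsRunTo (N : PetriNet P T) (m0 : P → ℕ) (l : List (P → ℕ)) : Prop :=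
  l.Chain' (fun a b => N.fires b a) ∧ l.getLast? = some m0

/-- A run of minimal length to its endpoint. -/
def MinRunTo (N : PetriNet P T) (m0 : P → ℕ) (l : List (P → ℕ)) : Prop :=
  N.IsRunTo m0 l ∧ ∀ l', N.IsRunTo m0 l' → l'.head? = l.head? → l.length ≤ l'.length

lemma IsRunTo.ne_nil {N : PetriNet P T} {m0 l} (h : N.IsRunTo m0 l) : l ≠ [] := by
  intro hl; rw [hl] at h; simpa using h.2

lemma run_exists (N : PetriNet P T) {m0 m : P → ℕ} (h : N.reach m0 m) :
    ∃ l, N.IsRunTo m0 l ∧ l.head? = some m := by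
  induction h with
  | refl => exact ⟨[m0], ⟨List.isChain_singleton _, rfl⟩, rfl⟩
  | @tail b c _ hbc ih =>
    obtain ⟨l, ⟨hch, hlast⟩, hhead⟩ := ih
    obtain ⟨hd, tl, rfl⟩ := List.exists_cons_of_ne_nil (l := l) (by rintro rfl; simp at hhead)
    refine ⟨c :: hd :: tl, ⟨?_, ?_⟩, rfl⟩
    · refine List.isChain_cons.mpr ⟨fun y hy => ?_, hch⟩
      simp only [List.head?_cons, Option.mem_def, Option.some_inj] at hy
      subst hy
      simp only [List.head?_cons, Option.some_inj] at hhead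
      subst hhead
      exact hbc
    · simpa using hlast

lemma minrun_exists (N : PetriNet P T) {m0 m : P → ℕ} (h : N.reach m0 m) :
    ∃ l, N.MinRunTo m0 l ∧ l.head? = some m := by
  classical
  obtain ⟨l0, hl0, hh0⟩ := N.run_exists h
  have hex : ∃ n, ∃ l, (N.IsRunTo m0 l ∧ l.head? = some m) ∧ l.length = n :=
    ⟨_, l0, ⟨hl0, hh0⟩, rfl⟩
  obtain ⟨l, ⟨hrun, hhead⟩, hlen⟩ := Nat.find_spec hex
  refine ⟨l, ⟨hrun, ?_⟩, hhead⟩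
  intro l' hrun' hhead'
  have hle : Nat.find hex ≤ l'.length :=
    Nat.find_le ⟨l', ⟨hrun', by rw [hhead', hhead]⟩, rfl⟩
  omega

lemma IsRunTo.suffix {N : PetriNet P T} {m0 l l₁} (h : N.IsRunTo m0 l) (hs : l₁ <:+ l)
    (hne : l₁ ≠ []) : N.IsRunTo m0 l₁ := by
  obtain ⟨l₂, rfl⟩ := hs
  refine ⟨h.1.suffix ⟨l₂, rfl⟩, ?_⟩
  rw [← List.getLast?_append_of_ne_nil l₂ hne]
  exact h.2

lemma MinRunTo.suffix {N : PetriNet P T} {m0 l l₁} (h : N.MinRunTo m0 l) (hs : l₁ <:+ l)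
    (hne : l₁ ≠ []) : N.MinRunTo m0 l₁ := by
  obtain ⟨l₂, rfl⟩ := hs
  refine ⟨h.1.suffix ⟨l₂, rfl⟩ hne, ?_⟩
  intro l' hl' hh
  have hl'ne : l' ≠ [] := hl'.ne_nil
  obtain ⟨hc2, _, hlink⟩ := List.isChain_append.mp h.1.1
  have hrun : N.IsRunTo m0 (l₂ ++ l') := by
    refine ⟨List.isChain_append.mpr ⟨hc2, hl'.1, fun x hx y hy => hlink x hx y (by rwa [← hh])⟩, ?_⟩
    rw [List.getLast?_append_of_ne_nil l₂ hl'ne]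
    exact hl'.2
  have hhead : (l₂ ++ l').head? = (l₂ ++ l₁).head? := by
    cases l₂ with
    | nil => simpa using hh
    | cons a t => simp
  have := h.2 (l₂ ++ l') hrun hhead
  simp only [List.length_append] at this
  omega

lemma fires_finite (N : PetriNet P T) (m : P → ℕ) : {x | N.fires m x}.Finite := by
  apply Set.Finite.subset (Set.finite_range (fun t : T => fun p => m p + N.post t p - N.pre t p))
  rintro x ⟨t, _, hx⟩
  exact ⟨t, by funext p; exact (hx p).symm⟩

lemma konig_step (N : PetriNet P T) (m0 : P → ℕ) {l : List (P → ℕ)}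
    (hne : l ≠ []) (hinf : {l' | N.MinRunTo m0 l' ∧ l <:+ l'}.Infinite) :
    ∃ x, N.fires l.headI x ∧ {l' | N.MinRunTo m0 l' ∧ (x :: l) <:+ l'}.Infinite := by
  classical
  by_contra hcon
  push_neg at hcon
  have hsub : {l' | N.MinRunTo m0 l' ∧ l <:+ l'} \ {l} ⊆
      ⋃ x ∈ {x | N.fires l.headI x}, {l' | N.MinRunTo m0 l' ∧ (x :: l) <:+ l'} := by
    rintro l' ⟨⟨hmr, hsuf⟩, hne'⟩
    obtain ⟨l₂, rfl⟩ := hsuf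
    have hl₂ : l₂ ≠ [] := by
      rintro rfl; exact hne' (by simp)
    obtain ⟨L, x, rfl⟩ := (List.eq_nil_or_concat' l₂).resolve_left hl₂
    have hsuf' : (x :: l) <:+ (L ++ [x]) ++ l := ⟨L, by simp⟩
    have hchain : List.Chain' (fun a b => N.fires b a) (x :: l) := hmr.1.1.suffix hsuf'
    have hfx : N.fires l.headI x := by
      obtain ⟨hd, tl, rfl⟩ := List.exists_cons_of_ne_nil hne
      exact (List.isChain_cons.mp hchain).1 hd rfl
    exact Set.mem_biUnion hfx ⟨hmr, hsuf'⟩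
  have hfin : ({l' | N.MinRunTo m0 l' ∧ l <:+ l'} \ {l}).Finite := by
    refine Set.Finite.subset (Set.Finite.biUnion (N.fires_finite l.headI) fun x hx => ?_) hsub
    exact hcon x hx
  exact (hinf.diff (Set.finite_singleton l)) hfin

lemma exists_pumping (N : PetriNet P T) (m0 : P → ℕ)
    (hinf : {m | N.reach m0 m}.Infinite) :
    ∃ a b, N.reach m0 a ∧ N.reach a b ∧ (∀ p, a p ≤ b p) ∧ a ≠ b := by
  classical
  -- the set of minimal runs is infinite
  have : Infinite {m // N.reach m0 m} := Set.infinite_coe_iff.mpr hinf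
  have hSinf : {l | N.MinRunTo m0 l}.Infinite := by
    refine Set.infinite_of_injective_forall_mem
      (f := fun m : {m // N.reach m0 m} => Classical.choose (N.minrun_exists m.2)) ?_ ?_
    · intro m m' hmm
      have h1 := (Classical.choose_spec (N.minrun_exists m.2)).2
      have h2 := (Classical.choose_spec (N.minrun_exists m'.2)).2
      have hmm' : Classical.choose (N.minrun_exists m.2) =
          Classical.choose (N.minrun_exists m'.2) := hmm
      rw [hmm', h2] at h1
      exact Subtype.ext (Option.some_inj.mp h1).symm
    · intro m
      exact (Classical.choose_spec (N.minrun_exists m.2)).1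
  -- every minimal run has [m0] as suffix
  have hQ0 : {l' | N.MinRunTo m0 l' ∧ [m0] <:+ l'}.Infinite := by
    refine Set.Infinite.mono (fun l hl => ?_) hSinf
    refine ⟨hl, ?_⟩
    obtain ⟨L, b, rfl⟩ := (List.eq_nil_or_concat' l).resolve_left hl.1.ne_nil
    have : b = m0 := by simpa using hl.1.2
    exact ⟨L, by rw [this]⟩
  -- Kőnig sequence
  let Q : List (P → ℕ) → Prop := fun l => l ≠ [] ∧ {l' | N.MinRunTo m0 l' ∧ l <:+ l'}.Infinite
  have hstepQ : ∀ l, Q l → ∃ x, N.fires l.headI x ∧ Q (x :: l) := by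
    intro l hQ
    obtain ⟨x, hx, hinf'⟩ := N.konig_step m0 hQ.1 hQ.2
    exact ⟨x, hx, List.cons_ne_nil _ _, hinf'⟩
  let g : ℕ → {l : List (P → ℕ) // Q l} := fun n =>
    Nat.rec ⟨[m0], List.cons_ne_nil _ _, hQ0⟩
      (fun _ ih => ⟨Classical.choose (hstepQ ih.1 ih.2) :: ih.1,
        (Classical.choose_spec (hstepQ ih.1 ih.2)).2⟩) n
  have hgsucc : ∀ n, (g (n + 1)).1 = Classical.choose (hstepQ (g n).1 (g n).2) :: (g n).1 :=
    fun n => rfl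
  let msq : ℕ → (P → ℕ) := fun n => (g n).1.headI
  have hfirestep : ∀ n, N.fires (msq n) (msq (n + 1)) := by
    intro n
    have := (Classical.choose_spec (hstepQ (g n).1 (g n).2)).1
    simpa [msq, hgsucc n] using this
  have hlen : ∀ n, (g n).1.length = n + 1 := by
    intro n
    induction n with
    | zero => rfl
    | succ n ih => rw [hgsucc n]; simp [ih]
  have hsuffix : ∀ a b : ℕ, a ≤ b → (g a).1 <:+ (g b).1 := by
    intro a b hab
    induction b, hab using Nat.le_induction with
    | base => exact List.suffix_refl _
    | succ n hn ih => exact ih.trans (by rw [hgsucc n]; exact List.suffix_cons _ _)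
  have hmin : ∀ n, N.MinRunTo m0 (g n).1 := by
    intro n
    obtain ⟨l', hl'⟩ := (g n).2.2.nonempty
    exact hl'.1.suffix hl'.2 (g n).2.1
  have hhead? : ∀ n, (g n).1.head? = some (msq n) := by
    intro n
    obtain ⟨hd, tl, he⟩ := List.exists_cons_of_ne_nil (g n).2.1
    rw [he]; simp [msq, he]
  have hreach0 : ∀ n, N.reach m0 (msq n) := by
    intro n
    induction n with
    | zero => exact Relation.ReflTransGen.refl
    | succ n ih => exact ih.tail (hfirestep n)
  have hreach : ∀ a b : ℕ, a ≤ b → N.reach (msq a) (msq b) := by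
    intro a b hab
    induction b, hab using Nat.le_induction with
    | base => exact Relation.ReflTransGen.refl
    | succ n hn ih => exact ih.tail (hfirestep n)
  have hdist : ∀ a b : ℕ, a < b → msq a ≠ msq b := by
    intro a b hab heq
    have := (hmin b).2 (g a).1 (hmin a).1 (by rw [hhead? a, hhead? b, heq])
    rw [hlen a, hlen b] at this
    omega
  obtain ⟨a, b, hab, hle⟩ :=
    (wellQuasiOrdered_le : WellQuasiOrdered (α := P → ℕ) (· ≤ ·)) msq
  exact ⟨msq a, msq b, hreach0 a, hreach a b hab.le, fun p => hle p, hdist a b hab⟩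

end PetriNet

namespace PetriNetAux

open PetriNet

lemma reach_div (N : PetriNet P T) (k : ℕ) (hk : 1 ≤ k) {m m' : P → ℕ} (h : N.reach m m') :
    N.creach (fun p => (m p : ℚ) / k) (fun p => (m' p : ℚ) / k) := by
  have hk0 : (0:ℚ) < k := by exact_mod_cast Nat.lt_of_lt_of_le Nat.zero_lt_one hk
  induction h with
  | refl => exact Relation.ReflTransGen.refl
  | @tail b c hab hbc ih =>
    refine ih.tail ?_
    obtain ⟨t, hen, heq⟩ := hbc
    refine ⟨t, 1/k, by positivity, ?_, ?_, ?_⟩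
    · rw [div_le_one hk0]; exact_mod_cast hk
    · intro p
      show 1 / (k:ℚ) * (N.pre t p : ℚ) ≤ (b p : ℚ) / k
      rw [one_div, inv_mul_eq_div]
      have : (N.pre t p : ℚ) ≤ (b p : ℚ) := by exact_mod_cast hen p
      gcongr
    · intro p
      show (c p : ℚ) / k = (b p : ℚ) / k + 1 / k * ((N.post t p : ℚ) - N.pre t p)
      have h1 : c p + N.pre t p = b p + N.post t p := by
        have := heq p; have := hen p; omega
      have h2 : (c p : ℚ) + N.pre t p = b p + N.post t p := by exact_mod_cast h1
      have h3 : (c p : ℚ) = b p + ((N.post t p : ℚ) - N.pre t p) := by linarith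
      rw [h3]; ring

lemma creach_add (N : PetriNet P T) {x y : P → ℚ} (z : P → ℚ) (hz : ∀ p, 0 ≤ z p)
    (h : N.creach x y) : N.creach (fun p => x p + z p) (fun p => y p + z p) := by
  induction h with
  | refl => exact Relation.ReflTransGen.refl
  | @tail b c hab hbc ih =>
    refine ih.tail ?_
    obtain ⟨t, l, hl0, hl1, hen, heq⟩ := hbc
    exact ⟨t, l, hl0, hl1, fun p => le_trans (hen p) (by dsimp only; linarith [hz p]),
      fun p => by dsimp only; rw [heq p]; ring⟩

end PetriNetAux

namespace WorkflowNet

variable (W : WorkflowNet P T)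

lemma f_mono {x y : P → ℚ} (h : W.toPetriNet.creach x y) : x W.f ≤ y W.f := by
  induction h with
  | refl => exact le_refl _
  | @tail b c hab hbc ih =>
    obtain ⟨t, l, hl0, hl1, hen, heq⟩ := hbc
    have h1 := heq W.f
    rw [W.no_from_final t] at h1
    simp only [Nat.cast_zero, sub_zero] at h1
    have h2 : (0:ℚ) ≤ l * (W.toPetriNet.post t W.f : ℚ) := by positivity
    refine le_trans ih ?_
    rw [h1]; linarith

lemma post_pos (t : T) : ∃ p, 0 < W.toPetriNet.post t p := by
  have h := (W.trans_on_path t).2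
  rcases Relation.ReflTransGen.cases_head h with heq | ⟨c, hc, _⟩
  · exact absurd heq (by simp)
  · cases c with
    | inl p => exact ⟨p, hc⟩
    | inr t' => exact hc.elim

lemma no_excess (δ : P → ℚ) (hδ : ∀ p, 0 ≤ δ p) (hne : δ ≠ 0)
    (h : W.toPetriNet.creach (fun p => mkQ W.f 1 p + δ p) (mkQ W.f 1)) : False := by
  have hδf : δ W.f = 0 := by
    have h1 := W.f_mono h
    simp only [mkQ, if_pos rfl] at h1
    have h2 := hδ W.f
    linarith
  obtain ⟨q, hq⟩ := Function.ne_iff.mp hne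
  have hq0 : 0 < δ q := lt_of_le_of_ne (hδ q) (Ne.symm hq)
  have hqf : q ≠ W.f := by rintro rfl; exact hq hδf
  rcases Relation.ReflTransGen.cases_tail h with heq | ⟨c, hc, hstep⟩
  · have := congrFun heq q
    simp only [mkQ, if_neg hqf, zero_add] at this
    exact hq this.symm
  · obtain ⟨t, l, hl0, hl1, hen, heqm⟩ := hstep
    have hcf : 1 ≤ c W.f := by
      have h1 := W.f_mono hc
      simp only [mkQ, if_pos rfl, hδf, add_zero] at h1
      exact h1
    have hf : (W.toPetriNet.post t W.f : ℚ) = 0 := by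
      have h1 := heqm W.f
      rw [W.no_from_final t] at h1
      simp only [mkQ, if_pos, Nat.cast_zero, sub_zero] at h1
      by_contra hne0
      have hpos : (0:ℚ) < W.toPetriNet.post t W.f :=
        lt_of_le_of_ne (by positivity) (Ne.symm hne0)
      have := mul_pos hl0 hpos
      linarith
    obtain ⟨p0, hp0⟩ := W.post_pos t
    have hppos : (0:ℚ) < (W.toPetriNet.post t p0 : ℚ) := by exact_mod_cast hp0
    have hp0f : p0 ≠ W.f := by rintro rfl; rw [hf] at hppos; exact lt_irrefl _ hppos
    have he := heqm p0
    simp only [mkQ, if_neg hp0f] at he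
    have hen0 := hen p0
    nlinarith [mul_pos hl0 hppos]

end WorkflowNet

theorem stmt7 (N : WorkflowNet P T) (h : N.csound) :
    ∀ k : ℕ, 1 ≤ k → N.toPetriNet.bounded (mk1 N.i k) := by
  intro k hk
  by_contra hub
  have hinf : {m | N.toPetriNet.reach (mk1 N.i k) m}.Infinite := by
    by_contra hfin
    rw [Set.not_infinite] at hfin
    apply hub
    refine ⟨hfin.toFinset.sup (fun m => Finset.univ.sup m), ?_⟩
    intro m' hm' p
    calc m' p ≤ Finset.univ.sup m' := Finset.le_sup (Finset.mem_univ p)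
      _ ≤ _ := Finset.le_sup (hfin.mem_toFinset.mpr hm')
  obtain ⟨a, b, hra, hrab, hle, hab⟩ := PetriNet.exists_pumping N.toPetriNet _ hinf
  have hk0 : (k:ℚ) ≠ 0 := Nat.cast_ne_zero.mpr (by omega)
  have hmk : (fun p => (mk1 N.i k p : ℚ) / k) = mkQ N.i 1 := by
    funext p
    by_cases hp : p = N.i <;> simp [mk1, mkQ, hp, div_self hk0]
  have h1 : N.toPetriNet.creach (mkQ N.i 1) (fun p => (a p : ℚ) / k) := by
    rw [← hmk]; exact PetriNetAux.reach_div N.toPetriNet k hk hra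
  have h2 := PetriNetAux.reach_div N.toPetriNet k hk hrab
  set δ : P → ℚ := fun p => (b p : ℚ) / k - (a p : ℚ) / k with hδdef
  have hδ0 : ∀ p, 0 ≤ δ p := by
    intro p
    have h3 : (a p : ℚ) ≤ (b p : ℚ) := by exact_mod_cast hle p
    simp only [hδdef, sub_nonneg]
    gcongr
  have hbd : (fun p => (b p : ℚ) / k) = fun p => (a p : ℚ) / k + δ p := by
    funext p; simp only [hδdef]; ring
  have h3 : N.toPetriNet.creach (fun p => (a p : ℚ) / k) (mkQ N.f 1) := h _ h1
  have h4 : N.toPetriNet.creach (fun p => (b p : ℚ) / k) (fun p => mkQ N.f 1 p + δ p) := by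
    rw [hbd]; exact PetriNetAux.creach_add N.toPetriNet δ hδ0 h3
  have h5 : N.toPetriNet.creach (mkQ N.i 1) (fun p => mkQ N.f 1 p + δ p) :=
    (h1.trans h2).trans h4
  have h6 := h _ h5
  refine N.no_excess δ hδ0 ?_ h6
  obtain ⟨p, hp⟩ := Function.ne_iff.mp hab
  have hlt : a p < b p := lt_of_le_of_ne (hle p) hp
  intro h0
  have := congrFun h0 p
  simp only [hδdef, Pi.zero_apply] at this
  have hkpos : (0:ℚ) < k := lt_of_lt_of_le zero_lt_one (by exact_mod_cast hk)
  have hltq : (a p : ℚ) / k < (b p : ℚ) / k :=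
    (div_lt_div_iff_of_pos_right hkpos).mpr (by exact_mod_cast hlt)
  linarith [this, hltq]
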